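/- Let B₂, B₃, ... be i.i.d. Bernoulli(1-λ) with λ ∈ (0,1), B₁ = 1, and W₁, W₂, ... i.i.d. standard Gaussians, all independent. Define X_i = Σ_{j=1}^i (Π_{k=j+1}^i (1-B_k)) B_j W_j. Then for every n ≥ 1 and t ∈ ℝ, E[e^{t Σ_{i=1}^n X_i}] ≥ λ^{n-1} e^{t²n²/2}. Consequently there is no constant α̃ < ∞ such that Σ_{i=1}^n X_i is sub-Gaussian with variance proxy nα̃ for all n. -/

import Mathlib

open MeasureTheory ProbabilityTheory Real
open scoped NNReal ENNReal

lemma gauss_pdf_mul (c : ℝ) : ∀ x : ℝ,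
    gaussianPDFReal 0 1 x * Real.exp (c * x)
      = Real.exp (c ^ 2 / 2) * gaussianPDFReal c 1 x := by
  intro x
  simp only [gaussianPDFReal, NNReal.coe_one, mul_one, sub_zero]
  rw [mul_comm (Real.exp (c ^ 2 / 2)), mul_assoc, ← Real.exp_add, mul_assoc, ← Real.exp_add]
  congr 2
  ring

lemma gauss_mgf_integrable (c : ℝ) :
    Integrable (fun x => Real.exp (c * x)) (gaussianReal 0 1) := by
  rw [gaussianReal_of_var_ne_zero _ one_ne_zero]
  have h : (gaussianPDF 0 1) = fun x => ((Real.toNNReal (gaussianPDFReal 0 1 x) : ℝ≥0) : ℝ≥0∞) :=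
    rfl
  rw [h, integrable_withDensity_iff_integrable_smul (by
    exact (measurable_gaussianPDFReal 0 1).real_toNNReal)]
  have : (fun x => (Real.toNNReal (gaussianPDFReal 0 1 x)) • Real.exp (c * x))
      = fun x => Real.exp (c ^ 2 / 2) * gaussianPDFReal c 1 x := by
    ext x
    rw [NNReal.smul_def, smul_eq_mul, Real.coe_toNNReal _ (gaussianPDFReal_nonneg 0 1 x),
      gauss_pdf_mul]
  rw [this]
  exact (integrable_gaussianPDFReal c 1).const_mul _

lemma gauss_mgf (c : ℝ) :
    ∫ x, Real.exp (c * x) ∂(gaussianReal 0 1) = Real.exp (c ^ 2 / 2) := by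
  rw [gaussianReal_of_var_ne_zero _ one_ne_zero]
  have h : (gaussianPDF 0 1) = fun x => ((Real.toNNReal (gaussianPDFReal 0 1 x) : ℝ≥0) : ℝ≥0∞) :=
    rfl
  rw [h, integral_withDensity_eq_integral_smul (by
    exact (measurable_gaussianPDFReal 0 1).real_toNNReal)]
  have : (fun x => (Real.toNNReal (gaussianPDFReal 0 1 x)) • Real.exp (c * x))
      = fun x => Real.exp (c ^ 2 / 2) * gaussianPDFReal c 1 x := by
    ext x
    rw [NNReal.smul_def, smul_eq_mul, Real.coe_toNNReal _ (gaussianPDFReal_nonneg 0 1 x),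
      gauss_pdf_mul]
  rw [this, integral_const_mul, integral_gaussianPDFReal_eq_one c one_ne_zero, mul_one]

lemma my_exp_abs_le (y : ℝ) : Real.exp |y| ≤ Real.exp y + Real.exp (-y) := by
  rcases abs_cases y with ⟨h, _⟩ | ⟨h, _⟩
  · rw [h]; nlinarith [Real.exp_pos (-y)]
  · rw [h]; nlinarith [Real.exp_pos y]

open MeasureTheory ProbabilityTheory in
theorem stmt_15 {Ω : Type*} [MeasurableSpace Ω] (P : Measure Ω) [IsProbabilityMeasure P]
    (lam : ℝ) (hlam : lam ∈ Set.Ioo (0:ℝ) 1)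
    (B W : ℕ → Ω → ℝ)
    (hBm : ∀ i, Measurable (B i)) (hWm : ∀ i, Measurable (W i))
    (hB1 : ∀ ω, B 1 ω = 1)
    (hBd : ∀ i, 2 ≤ i → Measure.map (B i) P =
      ENNReal.ofReal lam • Measure.dirac (0 : ℝ) +
        ENNReal.ofReal (1 - lam) • Measure.dirac (1 : ℝ))
    (hWd : ∀ i, 1 ≤ i → Measure.map (W i) P = gaussianReal 0 1)
    (hindep : iIndepFun
      (Sum.elim (fun i => B (i + 2)) (fun i => W (i + 1))) P)
    (X : ℕ → Ω → ℝ)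
    (hX : ∀ i ω, X i ω = ∑ j ∈ Finset.Icc 1 i,
      (∏ k ∈ Finset.Icc (j + 1) i, (1 - B k ω)) * (B j ω * W j ω)) :
    (∀ n : ℕ, 1 ≤ n → ∀ t : ℝ,
      lam ^ (n - 1) * Real.exp (t ^ 2 * (n : ℝ) ^ 2 / 2) ≤
        ∫ ω, Real.exp (t * ∑ i ∈ Finset.Icc 1 n, X i ω) ∂P) ∧
    ¬ ∃ atil : ℝ, ∀ n : ℕ, 1 ≤ n → ∀ t : ℝ,
      ∫ ω, Real.exp (t * ∑ i ∈ Finset.Icc 1 n, X i ω) ∂P ≤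
        Real.exp ((n : ℝ) * atil * t ^ 2 / 2) := by
  classical
  obtain ⟨hl0, hl1⟩ := hlam
  -- the indicator function of {0}
  set φ : ℝ → ℝ := fun x => if x = 0 then 1 else 0 with hφ_def
  have hφm : Measurable φ := by
    apply Measurable.ite _ measurable_const measurable_const
    have : {x : ℝ | x = 0} = {(0:ℝ)} := by ext x; simp
    rw [this]
    exact measurableSet_singleton 0
  have hφ01 : ∀ x : ℝ, 0 ≤ φ x := by
    intro x; simp only [hφ_def]; split <;> norm_num
  -- measurability of X and sums
  have hXm : ∀ i, Measurable (X i) := by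
    intro i
    have : X i = fun ω => ∑ j ∈ Finset.Icc 1 i,
        (∏ k ∈ Finset.Icc (j + 1) i, (1 - B k ω)) * (B j ω * W j ω) := funext (hX i)
    rw [this]
    exact Finset.measurable_sum _ fun j _ =>
      (Finset.measurable_prod _ fun k _ => measurable_const.sub (hBm k)).mul
        ((hBm j).mul (hWm j))
  -- a.e. the B i take values in {0,1}
  have hae : ∀ i, 2 ≤ i → ∀ᵐ ω ∂P, B i ω = 0 ∨ B i ω = 1 := by
    intro i hi
    have hS : MeasurableSet ({0, 1} : Set ℝ) :=
      (measurableSet_singleton 0).union (measurableSet_singleton 1)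
    have h1 : P (B i ⁻¹' {0, 1}) = 1 := by
      rw [← Measure.map_apply (hBm i) hS, hBd i hi]
      simp only [Measure.coe_add, Measure.coe_smul, Pi.add_apply, Pi.smul_apply,
        smul_eq_mul]
      rw [Measure.dirac_apply' _ hS, Measure.dirac_apply' _ hS]
      simp only [Set.mem_insert_iff, Set.mem_singleton_iff, Set.indicator_of_mem,
        Set.indicator]
      norm_num
      rw [← ENNReal.ofReal_add (le_of_lt hl0) (by linarith)]
      norm_num
    rw [ae_iff]
    have hset : {ω | ¬(B i ω = 0 ∨ B i ω = 1)} = (B i ⁻¹' {0, 1})ᶜ := by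
      ext ω; simp [Set.mem_compl_iff]
    rw [hset, prob_compl_eq_zero_iff ((hBm i) hS)]
    exact h1
  -- independence family with indicators on the B side, identity on the W side
  set fam : ℕ ⊕ ℕ → Ω → ℝ := fun k =>
    (Sum.elim (fun _ : ℕ => φ) (fun _ : ℕ => (id : ℝ → ℝ)) k) ∘
      (Sum.elim (fun i => B (i + 2)) (fun i => W (i + 1)) k) with hfam_def
  have hind1 : iIndepFun fam P := by
    refine hindep.comp _ ?_
    rintro (i | i)
    · exact hφm
    · exact measurable_id
  have hfam_meas : ∀ k, Measurable (fam k) := by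
    rintro (i | i)
    · exact hφm.comp (hBm (i + 2))
    · exact measurable_id.comp (hWm (i + 1))
  -- the single Bernoulli integral
  have hφB : ∀ i, 2 ≤ i → ∫ ω, φ (B i ω) ∂P = lam := by
    intro i hi
    have hdint : ∀ a : ℝ, Integrable φ (Measure.dirac a) :=
      fun a => (integrable_const (φ a)).congr (ae_eq_dirac' hφm).symm
    have hmap : ∫ ω, φ (B i ω) ∂P = ∫ x, φ x ∂(Measure.map (B i) P) :=
      (integral_map (hBm i).aemeasurable hφm.aestronglyMeasurable).symm
    rw [hmap, hBd i hi,
      integral_add_measure ((hdint 0).smul_measure ENNReal.ofReal_ne_top)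
        ((hdint 1).smul_measure ENNReal.ofReal_ne_top),
      integral_smul_measure, integral_smul_measure, integral_dirac, integral_dirac]
    have h0 : φ 0 = 1 := if_pos rfl
    have h1 : φ 1 = 0 := if_neg one_ne_zero
    rw [h0, h1, ENNReal.toReal_ofReal hl0.le]
    simp
  -- independence of products of indicators from a further indicator
  have key : ∀ (s : Finset ℕ) (a : ℕ), (∀ i ∈ s, 2 ≤ i) → 2 ≤ a → a ∉ s →
      IndepFun (fun ω => ∏ i ∈ s, φ (B i ω)) (fun ω => φ (B a ω)) P := by
    intro s a h2 ha2 has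
    have hnotmem : (Sum.inl (a - 2) : ℕ ⊕ ℕ) ∉ s.image (fun i => (Sum.inl (i - 2) : ℕ ⊕ ℕ)) := by
      simp only [Finset.mem_image, not_exists, not_and]
      intro i hi heq
      have : i - 2 = a - 2 := Sum.inl.inj heq
      have : i = a := by have := h2 i hi; omega
      exact has (this ▸ hi)
    have H := hind1.indepFun_finsetProd_of_notMem hfam_meas hnotmem
    have hinj : ∀ x ∈ s, ∀ y ∈ s, (Sum.inl (x - 2) : ℕ ⊕ ℕ) = Sum.inl (y - 2) → x = y := by
      intro x hx y hy hxy
      have := Sum.inl.inj hxy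
      have h2x := h2 x hx; have h2y := h2 y hy; omega
    have e1 : (∏ j ∈ s.image (fun i => (Sum.inl (i - 2) : ℕ ⊕ ℕ)), fam j)
        = fun ω => ∏ i ∈ s, φ (B i ω) := by
      funext ω
      rw [Finset.prod_apply, Finset.prod_image hinj]
      refine Finset.prod_congr rfl fun i hi => ?_
      simp [hfam_def, Nat.sub_add_cancel (h2 i hi)]
    have e2 : fam (Sum.inl (a - 2)) = fun ω => φ (B a ω) := by
      funext ω; simp [hfam_def, Nat.sub_add_cancel ha2]
    rw [e1, e2] at H
    exact H
  -- integral of products of indicators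
  have hprod : ∀ s : Finset ℕ, (∀ i ∈ s, 2 ≤ i) →
      ∫ ω, ∏ i ∈ s, φ (B i ω) ∂P = lam ^ s.card := by
    intro s
    induction s using Finset.induction_on with
    | empty => intro _; simp
    | @insert a s ha ih =>
      intro h2
      have ha2 : 2 ≤ a := h2 a (Finset.mem_insert_self a s)
      have hs2 : ∀ i ∈ s, 2 ≤ i := fun i hi => h2 i (Finset.mem_insert_of_mem hi)
      have ind := (key s a hs2 ha2 ha).symm
      have hmul := ind.integral_fun_mul_eq_mul_integral
        ((hφm.comp (hBm a)).aestronglyMeasurable)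
        ((Finset.measurable_prod _ fun i _ => hφm.comp (hBm i)).aestronglyMeasurable)
      calc ∫ ω, ∏ i ∈ insert a s, φ (B i ω) ∂P
          = ∫ ω, φ (B a ω) * ∏ i ∈ s, φ (B i ω) ∂P := by
            simp only [Finset.prod_insert ha]
        _ = (∫ ω, φ (B a ω) ∂P) * ∫ ω, ∏ i ∈ s, φ (B i ω) ∂P := hmul
        _ = lam * lam ^ s.card := by rw [hφB a ha2, ih hs2]
        _ = lam ^ (insert a s).card := by
            rw [Finset.card_insert_of_notMem ha, pow_succ]; ring
  -- MAIN LOWER BOUND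
  have hmain : ∀ n : ℕ, 1 ≤ n → ∀ t : ℝ,
      lam ^ (n - 1) * Real.exp (t ^ 2 * (n : ℝ) ^ 2 / 2) ≤
        ∫ ω, Real.exp (t * ∑ i ∈ Finset.Icc 1 n, X i ω) ∂P := by
    intro n hn t
    set c : ℝ := t * n with hc
    set d : ℝ := |t| * n with hd
    have hd0 : 0 ≤ d := mul_nonneg (abs_nonneg t) (Nat.cast_nonneg n)
    set Y : Ω → ℝ := fun ω => ∏ i ∈ Finset.Icc 2 n, φ (B i ω) with hY_def
    have hYmeas : Measurable Y := Finset.measurable_prod _ fun i _ => hφm.comp (hBm i)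
    have hYnn : ∀ ω, 0 ≤ Y ω := fun ω => Finset.prod_nonneg fun i _ => hφ01 _
    -- value of ∫ Y
    have hEY : ∫ ω, Y ω ∂P = lam ^ (n - 1) := by
      rw [hY_def, hprod (Finset.Icc 2 n) (fun i hi => (Finset.mem_Icc.mp hi).1)]
      congr 1
      rw [Nat.card_Icc]
      omega
    -- independence of Y and exp (c * W 1)
    have hYW : IndepFun Y (fun ω => Real.exp (c * W 1 ω)) P := by
      have hnotmem : (Sum.inr 0 : ℕ ⊕ ℕ) ∉
          (Finset.Icc 2 n).image (fun i => (Sum.inl (i - 2) : ℕ ⊕ ℕ)) := by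
        simp
      have H := hind1.indepFun_finsetProd_of_notMem hfam_meas hnotmem
      have hinj : ∀ x ∈ Finset.Icc 2 n, ∀ y ∈ Finset.Icc 2 n,
          (Sum.inl (x - 2) : ℕ ⊕ ℕ) = Sum.inl (y - 2) → x = y := by
        intro x hx y hy hxy
        have := Sum.inl.inj hxy
        have h2x := (Finset.mem_Icc.mp hx).1; have h2y := (Finset.mem_Icc.mp hy).1; omega
      have e1 : (∏ j ∈ (Finset.Icc 2 n).image (fun i => (Sum.inl (i - 2) : ℕ ⊕ ℕ)), fam j)
          = Y := by
        funext ω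
        rw [Finset.prod_apply, Finset.prod_image hinj]
        refine Finset.prod_congr rfl fun i hi => ?_
        simp [hfam_def, Nat.sub_add_cancel (Finset.mem_Icc.mp hi).1]
      have e2 : fam (Sum.inr 0) = W 1 := rfl
      rw [e1, e2] at H
      exact H.comp measurable_id (Real.measurable_exp.comp (measurable_id.const_mul c))
    -- expectation of exp (c * W 1)
    have hEexp : ∫ ω, Real.exp (c * W 1 ω) ∂P = Real.exp (c ^ 2 / 2) := by
      have hmeas : AEStronglyMeasurable (fun x => Real.exp (c * x)) (Measure.map (W 1) P) :=
        (Real.measurable_exp.comp (measurable_id.const_mul c)).aestronglyMeasurable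
      have h := integral_map (μ := P) (hWm 1).aemeasurable hmeas
      rw [hWd 1 le_rfl, gauss_mgf] at h
      exact h.symm
    -- integrability of exp (c * W 1)
    have hexp_int : Integrable (fun ω => Real.exp (c * W 1 ω)) P := by
      have h : Integrable (fun x => Real.exp (c * x)) (Measure.map (W 1) P) := by
        rw [hWd 1 le_rfl]; exact gauss_mgf_integrable c
      exact (integrable_map_measure
        ((Real.measurable_exp.comp (measurable_id.const_mul c)).aestronglyMeasurable)
        (hWm 1).aemeasurable).mp h
    -- product formula
    have hEmul : ∫ ω, Y ω * Real.exp (c * W 1 ω) ∂P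
        = (∫ ω, Y ω ∂P) * ∫ ω, Real.exp (c * W 1 ω) ∂P :=
      hYW.integral_fun_mul_eq_mul_integral
        hYmeas.aestronglyMeasurable
        ((Real.measurable_exp.comp ((hWm 1).const_mul c)).aestronglyMeasurable)
    -- pointwise lower bound
    have hlow : ∀ ω, Y ω * Real.exp (c * W 1 ω)
        ≤ Real.exp (t * ∑ i ∈ Finset.Icc 1 n, X i ω) := by
      intro ω
      by_cases hb0 : ∀ j ∈ Finset.Icc 2 n, B j ω = 0
      · have hY1 : Y ω = 1 := Finset.prod_eq_one fun i hi => if_pos (hb0 i hi)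
        have hXi : ∀ i ∈ Finset.Icc 1 n, X i ω = W 1 ω := by
          intro i hi
          obtain ⟨hi1, hin⟩ := Finset.mem_Icc.mp hi
          rw [hX]
          rw [Finset.sum_eq_single_of_mem 1 (Finset.mem_Icc.mpr ⟨le_rfl, hi1⟩)]
          · have hpr : ∏ k ∈ Finset.Icc (1 + 1) i, (1 - B k ω) = 1 := by
              refine Finset.prod_eq_one fun k hk => ?_
              obtain ⟨hk2, hki⟩ := Finset.mem_Icc.mp hk
              rw [hb0 k (Finset.mem_Icc.mpr ⟨hk2, hki.trans hin⟩)]; ring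
            rw [hpr, hB1]; ring
          · intro j hj hj1
            obtain ⟨hj_1, hji⟩ := Finset.mem_Icc.mp hj
            have hj2 : 2 ≤ j := by omega
            rw [hb0 j (Finset.mem_Icc.mpr ⟨hj2, hji.trans hin⟩)]; ring
        have hsum : ∑ i ∈ Finset.Icc 1 n, X i ω = (n : ℝ) * W 1 ω := by
          rw [Finset.sum_congr rfl hXi, Finset.sum_const, Nat.card_Icc, nsmul_eq_mul]
          norm_num
        rw [hsum, hY1, one_mul, hc]
        apply le_of_eq
        congr 1
        ring
      · push_neg at hb0
        obtain ⟨j, hj, hbj⟩ := hb0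
        have hY0 : Y ω = 0 := Finset.prod_eq_zero hj (if_neg hbj)
        rw [hY0, zero_mul]
        exact (Real.exp_pos _).le
    -- integrability of the upper function
    have hup : Integrable (fun ω => Real.exp (t * ∑ i ∈ Finset.Icc 1 n, X i ω)) P := by
      set h : ℝ → ℝ := fun x => Real.exp (d * x) + Real.exp (-d * x) with hh_def
      have hhm : Measurable h :=
        (Real.measurable_exp.comp (measurable_id.const_mul d)).add
          (Real.measurable_exp.comp (measurable_id.const_mul (-d)))
      have hhnn : ∀ x, 0 ≤ h x := fun x =>
        add_nonneg (Real.exp_pos _).le (Real.exp_pos _).le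
      -- a second composed independent family
      set fam2 : ℕ ⊕ ℕ → Ω → ℝ := fun k =>
        (Sum.elim (fun _ : ℕ => φ) (fun _ : ℕ => h) k) ∘
          (Sum.elim (fun i => B (i + 2)) (fun i => W (i + 1)) k) with hfam2_def
      have hind2 : iIndepFun fam2 P := by
        refine hindep.comp _ ?_
        rintro (i | i)
        · exact hφm
        · exact hhm
      have hfam2_meas : ∀ k, Measurable (fam2 k) := by
        rintro (i | i)
        · exact hφm.comp (hBm (i + 2))
        · exact hhm.comp (hWm (i + 1))
      -- each factor is integrable
      have hWint : ∀ a : ℕ, 1 ≤ a → Integrable (fun ω => h (W a ω)) P := by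
        intro a ha
        have hmap : Integrable h (Measure.map (W a) P) := by
          rw [hWd a ha]
          exact (gauss_mgf_integrable d).add (gauss_mgf_integrable (-d))
        exact (integrable_map_measure hhm.aestronglyMeasurable (hWm a).aemeasurable).mp hmap
      -- independence of a product from one more factor
      have keyW : ∀ (s : Finset ℕ) (a : ℕ), (∀ j ∈ s, 1 ≤ j) → 1 ≤ a → a ∉ s →
          IndepFun (fun ω => ∏ j ∈ s, h (W j ω)) (fun ω => h (W a ω)) P := by
        intro s a h1s ha1 has
        have hnotmem : (Sum.inr (a - 1) : ℕ ⊕ ℕ) ∉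
            s.image (fun j => (Sum.inr (j - 1) : ℕ ⊕ ℕ)) := by
          simp only [Finset.mem_image, not_exists, not_and]
          intro j hj heq
          have : j - 1 = a - 1 := Sum.inr.inj heq
          have : j = a := by have := h1s j hj; omega
          exact has (this ▸ hj)
        have H := hind2.indepFun_finsetProd_of_notMem hfam2_meas hnotmem
        have hinj : ∀ x ∈ s, ∀ y ∈ s,
            (Sum.inr (x - 1) : ℕ ⊕ ℕ) = Sum.inr (y - 1) → x = y := by
          intro x hx y hy hxy
          have := Sum.inr.inj hxy
          have h1x := h1s x hx; have h1y := h1s y hy; omega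
        have e1 : (∏ j ∈ s.image (fun j => (Sum.inr (j - 1) : ℕ ⊕ ℕ)), fam2 j)
            = fun ω => ∏ j ∈ s, h (W j ω) := by
          funext ω
          rw [Finset.prod_apply, Finset.prod_image hinj]
          refine Finset.prod_congr rfl fun j hj => ?_
          simp [hfam2_def, Nat.sub_add_cancel (h1s j hj)]
        have e2 : fam2 (Sum.inr (a - 1)) = fun ω => h (W a ω) := by
          funext ω; simp [hfam2_def, Nat.sub_add_cancel ha1]
        rw [e1, e2] at H
        exact H
      -- integrability of the product
      have hGint : ∀ s : Finset ℕ, (∀ j ∈ s, 1 ≤ j) →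
          Integrable (fun ω => ∏ j ∈ s, h (W j ω)) P := by
        intro s
        induction s using Finset.induction_on with
        | empty => intro _; simp [integrable_const]
        | @insert a s ha ih =>
          intro h1s
          have ha1 : 1 ≤ a := h1s a (Finset.mem_insert_self a s)
          have hs1 : ∀ j ∈ s, 1 ≤ j := fun j hj => h1s j (Finset.mem_insert_of_mem hj)
          have ind := (keyW s a hs1 ha1 ha).symm
          have := ind.integrable_mul (hWint a ha1) (ih hs1)
          have heq : ((fun ω => h (W a ω)) * fun ω => ∏ j ∈ s, h (W j ω))
              = fun ω => ∏ j ∈ insert a s, h (W j ω) := by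
            funext ω; simp [Finset.prod_insert ha]
          rwa [heq] at this
      have hGint' := hGint (Finset.Icc 1 n) (fun j hj => (Finset.mem_Icc.mp hj).1)
      -- a.e. bound
      have haeAll : ∀ᵐ ω ∂P, ∀ j ∈ Finset.Icc 2 n, (B j ω = 0 ∨ B j ω = 1) :=
        (Finset.eventually_all (Finset.Icc 2 n)).mpr
          fun j hj => hae j (Finset.mem_Icc.mp hj).1
      refine Integrable.mono' hGint'
        ((Real.measurable_exp.comp
          ((Finset.measurable_sum _ fun i _ => hXm i).const_mul t)).aestronglyMeasurable) ?_
      filter_upwards [haeAll] with ω hb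
      have habs : ∀ j, 2 ≤ j → j ≤ n → |B j ω| ≤ 1 := by
        intro j hj2 hjn
        rcases hb j (Finset.mem_Icc.mpr ⟨hj2, hjn⟩) with h0 | h0 <;> rw [h0] <;> norm_num
      have hBabs : ∀ j, 1 ≤ j → j ≤ n → |B j ω| ≤ 1 := by
        intro j hj1 hjn
        rcases eq_or_lt_of_le hj1 with h1 | h1
        · rw [← h1, hB1]; norm_num
        · exact habs j h1 hjn
      have h1mB : ∀ k, 2 ≤ k → k ≤ n → |1 - B k ω| ≤ 1 := by
        intro k hk2 hkn
        rcases hb k (Finset.mem_Icc.mpr ⟨hk2, hkn⟩) with h0 | h0 <;> rw [h0] <;> norm_num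
      have hXb : ∀ i ∈ Finset.Icc 1 n, |X i ω| ≤ ∑ j ∈ Finset.Icc 1 n, |W j ω| := by
        intro i hi
        obtain ⟨hi1, hin⟩ := Finset.mem_Icc.mp hi
        rw [hX]
        calc |∑ j ∈ Finset.Icc 1 i,
              (∏ k ∈ Finset.Icc (j + 1) i, (1 - B k ω)) * (B j ω * W j ω)|
            ≤ ∑ j ∈ Finset.Icc 1 i,
              |(∏ k ∈ Finset.Icc (j + 1) i, (1 - B k ω)) * (B j ω * W j ω)| :=
            Finset.abs_sum_le_sum_abs _ _
          _ ≤ ∑ j ∈ Finset.Icc 1 i, |W j ω| := by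
            refine Finset.sum_le_sum fun j hj => ?_
            obtain ⟨hj1, hji⟩ := Finset.mem_Icc.mp hj
            have hprod1 : |∏ k ∈ Finset.Icc (j + 1) i, (1 - B k ω)| ≤ 1 := by
              rw [Finset.abs_prod]
              refine Finset.prod_le_one (fun k _ => abs_nonneg _) fun k hk => ?_
              obtain ⟨hk1, hki⟩ := Finset.mem_Icc.mp hk
              exact h1mB k (by omega) (hki.trans hin)
            calc |(∏ k ∈ Finset.Icc (j + 1) i, (1 - B k ω)) * (B j ω * W j ω)|
                = |∏ k ∈ Finset.Icc (j + 1) i, (1 - B k ω)| * (|B j ω| * |W j ω|) := by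
                  rw [abs_mul, abs_mul]
              _ ≤ 1 * (1 * |W j ω|) := by
                  refine mul_le_mul hprod1 ?_ (by positivity) (by norm_num)
                  exact mul_le_mul (hBabs j hj1 (hji.trans hin)) le_rfl (abs_nonneg _)
                    (by norm_num)
              _ = |W j ω| := by ring
          _ ≤ ∑ j ∈ Finset.Icc 1 n, |W j ω| :=
            Finset.sum_le_sum_of_subset_of_nonneg
              (Finset.Icc_subset_Icc_right hin) (fun _ _ _ => abs_nonneg _)
      have hexp_bound : t * ∑ i ∈ Finset.Icc 1 n, X i ω
          ≤ ∑ j ∈ Finset.Icc 1 n, d * |W j ω| := by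
        calc t * ∑ i ∈ Finset.Icc 1 n, X i ω
            ≤ |t * ∑ i ∈ Finset.Icc 1 n, X i ω| := le_abs_self _
          _ = |t| * |∑ i ∈ Finset.Icc 1 n, X i ω| := abs_mul _ _
          _ ≤ |t| * ∑ i ∈ Finset.Icc 1 n, |X i ω| :=
            mul_le_mul_of_nonneg_left (Finset.abs_sum_le_sum_abs _ _) (abs_nonneg t)
          _ ≤ |t| * ∑ i ∈ Finset.Icc 1 n, (∑ j ∈ Finset.Icc 1 n, |W j ω|) :=
            mul_le_mul_of_nonneg_left (Finset.sum_le_sum hXb) (abs_nonneg t)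
          _ = ∑ j ∈ Finset.Icc 1 n, d * |W j ω| := by
            rw [Finset.sum_const, Nat.card_Icc, Nat.add_sub_cancel, nsmul_eq_mul, hd]
            simp only [Finset.mul_sum]
            exact Finset.sum_congr rfl fun j _ => by ring
      rw [Real.norm_eq_abs, abs_of_pos (Real.exp_pos _)]
      calc Real.exp (t * ∑ i ∈ Finset.Icc 1 n, X i ω)
          ≤ Real.exp (∑ j ∈ Finset.Icc 1 n, d * |W j ω|) := Real.exp_le_exp.mpr hexp_bound
        _ = ∏ j ∈ Finset.Icc 1 n, Real.exp (d * |W j ω|) := Real.exp_sum _ _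
        _ ≤ ∏ j ∈ Finset.Icc 1 n, h (W j ω) := by
            refine Finset.prod_le_prod (fun j _ => (Real.exp_pos _).le) fun j _ => ?_
            have : d * |W j ω| = |d * W j ω| := by
              rw [abs_mul, abs_of_nonneg hd0]
            rw [this, hh_def]
            have := my_exp_abs_le (d * W j ω)
            simpa [neg_mul] using this
    calc lam ^ (n - 1) * Real.exp (t ^ 2 * (n : ℝ) ^ 2 / 2)
        = (∫ ω, Y ω ∂P) * ∫ ω, Real.exp (c * W 1 ω) ∂P := by
          rw [hEY, hEexp]
          congr 2
          rw [hc]; ring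
      _ = ∫ ω, Y ω * Real.exp (c * W 1 ω) ∂P := hEmul.symm
      _ ≤ ∫ ω, Real.exp (t * ∑ i ∈ Finset.Icc 1 n, X i ω) ∂P := by
          refine integral_mono_of_nonneg (ae_of_all _ fun ω =>
            mul_nonneg (hYnn ω) (Real.exp_pos _).le) hup (ae_of_all _ hlow)
  refine ⟨hmain, ?_⟩
  rintro ⟨atil, hat⟩
  set n : ℕ := ⌈atil - 2 * Real.log lam⌉₊ + 1 with hn_def
  have hn1 : 1 ≤ n := Nat.le_add_left 1 _
  have h := (hmain n hn1 1).trans (hat n hn1 1)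
  have hpos : 0 < lam ^ (n - 1) * Real.exp (1 ^ 2 * (n : ℝ) ^ 2 / 2) :=
    mul_pos (pow_pos hl0 _) (Real.exp_pos _)
  have hlog := Real.log_le_log hpos h
  rw [Real.log_mul (ne_of_gt (pow_pos hl0 _)) (ne_of_gt (Real.exp_pos _)),
    Real.log_pow, Real.log_exp, Real.log_exp] at hlog
  have hcast : ((n - 1 : ℕ) : ℝ) = (n : ℝ) - 1 := by
    rw [Nat.cast_sub hn1]; norm_num
  rw [hcast] at hlog
  have hloglam : Real.log lam < 0 := Real.log_neg hl0 hl1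
  have hx : atil - 2 * Real.log lam < (n : ℝ) := by
    have := Nat.le_ceil (atil - 2 * Real.log lam)
    have h2 : ((⌈atil - 2 * Real.log lam⌉₊ : ℕ) : ℝ) < (n : ℝ) := by
      rw [hn_def]; push_cast; linarith
    linarith
  have hnR : (1 : ℝ) ≤ (n : ℝ) := by exact_mod_cast hn1
  nlinarith [mul_lt_mul_of_pos_left hx (show (0:ℝ) < (n : ℝ) by linarith), hlog, hloglam, hnR]
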